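/- Let n, p, s ≥ 1. Let f: ℝⁿ → ℝⁿ be C¹, let h: ℝⁿ → ℝᵖ and h^⊥: ℝⁿ → ℝˢ be C², let Q be a C¹ map from ℝᵖ to the real symmetric p×p matrices and R a C¹ map from ℝˢ to the real symmetric s×s matrices. Define P(x) := Dh(x)ᵀ·Q(h(x))·Dh(x) + Dh^⊥(x)ᵀ·R(h^⊥(x))·Dh^⊥(x) and g(x) := Dh^⊥(x)·f(x). Then for every x ∈ ℝⁿ and every v ∈ ℝⁿ with Dh(x)·v = 0, setting w := Dh^⊥(x)·v, one has vᵀ·L_f P(x)·v = wᵀ·(Σ_γ (∂R/∂ξ_γ)(h^⊥(x))·g_γ(x))·w + 2·(Dg(x)·v)ᵀ·R(h^⊥(x))·w, where ∂R/∂ξ_γ denotes the partial derivative of R with respect to its γ-th argument and Dg(x) is the Jacobian of g at x. -/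

import Mathlib

open Matrix

/-- Partial derivative `∂g/∂x_a (x)` of a real-valued function on `ℝ^ι`. -/
noncomputable def pdv {ι : Type*} [Fintype ι] [DecidableEq ι]
    (g : (ι → ℝ) → ℝ) (a : ι) (x : ι → ℝ) : ℝ :=
  fderiv ℝ g x (Pi.single a 1)

/-- Jacobian matrix `Dh(x)` of `h : ℝ^ι → ℝ^κ`. -/
noncomputable def jacobianM {ι κ : Type*} [Fintype ι] [DecidableEq ι] [Fintype κ]
    (h : (ι → ℝ) → (κ → ℝ)) (x : ι → ℝ) : Matrix κ ι ℝ :=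
  Matrix.of fun i a => fderiv ℝ h x (Pi.single a 1) i

/-- Lie derivative of a matrix-valued map `P` along the vector field `f`:
`(L_f P)_{ab}(x) = Σ_c (∂P_{ab}/∂x_c·f_c + P_{ac}·∂f_c/∂x_b + P_{bc}·∂f_c/∂x_a)`. -/
noncomputable def lieDerivM {ι : Type*} [Fintype ι] [DecidableEq ι]
    (f : (ι → ℝ) → (ι → ℝ)) (P : (ι → ℝ) → Matrix ι ι ℝ) (x : ι → ℝ) : Matrix ι ι ℝ :=
  Matrix.of fun a b => ∑ c,
    (pdv (fun y => P y a b) c x * f x c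
      + P x a c * pdv (fun y => f y c) b x
      + P x b c * pdv (fun y => f y c) a x)

lemma clm_sum_single {ι : Type*} [Fintype ι] [DecidableEq ι] {F : Type*}
    [NormedAddCommGroup F] [NormedSpace ℝ F]
    (L : (ι → ℝ) →L[ℝ] F) (v : ι → ℝ) : L v = ∑ a, v a • L (Pi.single a 1) := by
  have hv : (v : ι → ℝ) = ∑ a, v a • (Pi.single a 1 : ι → ℝ) := by
    ext b; simp [Pi.single_apply]
  conv_lhs => rw [hv]
  simp

lemma jac_mulVec {ι κ : Type*} [Fintype ι] [DecidableEq ι] [Fintype κ]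
    (h : (ι → ℝ) → (κ → ℝ)) (y v : ι → ℝ) :
    (jacobianM h y).mulVec v = fderiv ℝ h y v := by
  ext i
  rw [clm_sum_single (fderiv ℝ h y) v]
  simp [jacobianM, Matrix.mulVec, dotProduct, mul_comm]

lemma pull_quad {ι κ : Type*} [Fintype ι] [DecidableEq ι] [Fintype κ]
    (h : (ι → ℝ) → (κ → ℝ)) (M : Matrix κ κ ℝ) (y v1 v2 : ι → ℝ) :
    v1 ⬝ᵥ ((jacobianM h y)ᵀ * M * jacobianM h y).mulVec v2
      = (fderiv ℝ h y v1) ⬝ᵥ M.mulVec (fderiv ℝ h y v2) := by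
  rw [← Matrix.mulVec_mulVec, ← Matrix.mulVec_mulVec, Matrix.dotProduct_mulVec,
    Matrix.vecMul_transpose, jac_mulVec, jac_mulVec]

lemma dot_expand {κ : Type*} [Fintype κ] (z z' : κ → ℝ) (M : Matrix κ κ ℝ) :
    z ⬝ᵥ M.mulVec z' = ∑ i, ∑ j, z i * M i j * z' j := by
  simp [dotProduct, Matrix.mulVec, Finset.mul_sum, mul_assoc]

/-- For the pullback metric `P = Dhᵀ·(Q∘h)·Dh + Dh^⊥ᵀ·(R∘h^⊥)·Dh^⊥` and `g := Dh^⊥·f`, for every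
`v` with `Dh(x)·v = 0` and `w := Dh^⊥(x)·v`:
`vᵀ·L_f P(x)·v = wᵀ·(Σ_γ ∂R/∂ξ_γ(h^⊥(x))·g_γ(x))·w + 2·(Dg(x)·v)ᵀ·R(h^⊥(x))·w`. -/
theorem stmt_11 {n p s : ℕ} (hn : 1 ≤ n) (hp : 1 ≤ p) (hs : 1 ≤ s)
    (f : (Fin n → ℝ) → (Fin n → ℝ)) (hf : ContDiff ℝ 1 f)
    (h : (Fin n → ℝ) → (Fin p → ℝ)) (hh : ContDiff ℝ 2 h)
    (hperp : (Fin n → ℝ) → (Fin s → ℝ)) (hhperp : ContDiff ℝ 2 hperp)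
    (Q : (Fin p → ℝ) → Matrix (Fin p) (Fin p) ℝ)
    (hQc : ∀ i j, ContDiff ℝ 1 fun y => Q y i j) (hQsym : ∀ y, (Q y).IsSymm)
    (R : (Fin s → ℝ) → Matrix (Fin s) (Fin s) ℝ)
    (hRc : ∀ α β, ContDiff ℝ 1 fun ξ => R ξ α β) (hRsym : ∀ ξ, (R ξ).IsSymm) :
    let P : (Fin n → ℝ) → Matrix (Fin n) (Fin n) ℝ := fun x =>
      (jacobianM h x)ᵀ * Q (h x) * jacobianM h x
        + (jacobianM hperp x)ᵀ * R (hperp x) * jacobianM hperp x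
    let g : (Fin n → ℝ) → (Fin s → ℝ) := fun x => fderiv ℝ hperp x (f x)
    ∀ (x v : Fin n → ℝ), fderiv ℝ h x v = 0 →
      v ⬝ᵥ (lieDerivM f P x).mulVec v
        = (fderiv ℝ hperp x v) ⬝ᵥ
            (Matrix.of fun α β =>
              ∑ γ, pdv (fun ξ => R ξ α β) γ (hperp x) * g x γ).mulVec (fderiv ℝ hperp x v)
          + 2 * ((fderiv ℝ g x v) ⬝ᵥ (R (hperp x)).mulVec (fderiv ℝ hperp x v)) := by
  intro P g x v hv
  have hPdef : P = fun x => (jacobianM h x)ᵀ * Q (h x) * jacobianM h x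
        + (jacobianM hperp x)ᵀ * R (hperp x) * jacobianM hperp x := rfl
  have hgdef : g = fun x => fderiv ℝ hperp x (f x) := rfl
  -- basic differentiability
  have hfd : Differentiable ℝ f := hf.differentiable one_ne_zero
  have hhd : Differentiable ℝ h := hh.differentiable (by norm_num)
  have hpd : Differentiable ℝ hperp := hhperp.differentiable (by norm_num)
  have hh1 : ContDiff ℝ 1 (fderiv ℝ h) := hh.fderiv_right (by norm_num)
  have hp1 : ContDiff ℝ 1 (fderiv ℝ hperp) := hhperp.fderiv_right (by norm_num)
  have hDf : HasFDerivAt f (fderiv ℝ f x) x := (hfd x).hasFDerivAt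
  have hAh : HasFDerivAt h (fderiv ℝ h x) x := (hhd x).hasFDerivAt
  have hBp : HasFDerivAt hperp (fderiv ℝ hperp x) x := (hpd x).hasFDerivAt
  have hFh : HasFDerivAt (fderiv ℝ h) (fderiv ℝ (fderiv ℝ h) x) x :=
    ((hh1.differentiable one_ne_zero) x).hasFDerivAt
  have hFp : HasFDerivAt (fderiv ℝ hperp) (fderiv ℝ (fderiv ℝ hperp) x) x :=
    ((hp1.differentiable one_ne_zero) x).hasFDerivAt
  -- component derivative builders
  have hUh : ∀ (z : Fin n → ℝ) (i : Fin p),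
      HasFDerivAt (fun y => fderiv ℝ h y z i)
        ((ContinuousLinearMap.proj i).comp
          ((ContinuousLinearMap.apply ℝ (Fin p → ℝ) z).comp (fderiv ℝ (fderiv ℝ h) x))) x :=
    fun z i => by
      exact (ContinuousLinearMap.proj i).hasFDerivAt.comp x
        ((ContinuousLinearMap.apply ℝ (Fin p → ℝ) z).hasFDerivAt.comp x hFh)
  have hUp : ∀ (z : Fin n → ℝ) (α : Fin s),
      HasFDerivAt (fun y => fderiv ℝ hperp y z α)
        ((ContinuousLinearMap.proj α).comp
          ((ContinuousLinearMap.apply ℝ (Fin s → ℝ) z).comp (fderiv ℝ (fderiv ℝ hperp) x))) x :=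
    fun z α => by
      exact (ContinuousLinearMap.proj α).hasFDerivAt.comp x
        ((ContinuousLinearMap.apply ℝ (Fin s → ℝ) z).hasFDerivAt.comp x hFp)
  have hq : ∀ i j, HasFDerivAt (fun y => Q (h y) i j)
      ((fderiv ℝ (fun ξ => Q ξ i j) (h x)).comp (fderiv ℝ h x)) x :=
    fun i j => (((hQc i j).differentiable one_ne_zero) (h x)).hasFDerivAt.comp x hAh
  have hr : ∀ α β, HasFDerivAt (fun y => R (hperp y) α β)
      ((fderiv ℝ (fun ξ => R ξ α β) (hperp x)).comp (fderiv ℝ hperp x)) x :=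
    fun α β => (((hRc α β).differentiable one_ne_zero) (hperp x)).hasFDerivAt.comp x hBp
  -- entrywise formula for P
  have hPe : ∀ (y : Fin n → ℝ) (a b : Fin n), P y a b =
      (∑ i, ∑ j, fderiv ℝ h y (Pi.single a 1) i * Q (h y) i j
          * fderiv ℝ h y (Pi.single b 1) j)
        + ∑ α, ∑ β, fderiv ℝ hperp y (Pi.single a 1) α * R (hperp y) α β
            * fderiv ℝ hperp y (Pi.single b 1) β := by
    intro y a b
    simp only [hPdef, Matrix.add_apply, Matrix.mul_apply, Matrix.transpose_apply, jacobianM,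
      Matrix.of_apply, Finset.sum_mul]
    congr 1 <;> rw [Finset.sum_comm]
  have hPdiff : ∀ a b : Fin n, DifferentiableAt ℝ (fun y => P y a b) x := by
    intro a b
    have he : (fun y => P y a b) = fun y =>
        (∑ i, ∑ j, fderiv ℝ h y (Pi.single a 1) i * Q (h y) i j
          * fderiv ℝ h y (Pi.single b 1) j)
        + ∑ α, ∑ β, fderiv ℝ hperp y (Pi.single a 1) α * R (hperp y) α β
            * fderiv ℝ hperp y (Pi.single b 1) β := funext fun y => hPe y a b
    rw [he]
    apply DifferentiableAt.add
    · exact DifferentiableAt.fun_sum fun i _ => DifferentiableAt.fun_sum fun j _ =>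
        ((hUh _ i).differentiableAt.mul (hq i j).differentiableAt).mul
          (hUh _ j).differentiableAt
    · exact DifferentiableAt.fun_sum fun α _ => DifferentiableAt.fun_sum fun β _ =>
        ((hUp _ α).differentiableAt.mul (hr α β).differentiableAt).mul
          (hUp _ β).differentiableAt
  -- the quadratic-form function and its two derivative computations
  have hχval : ∀ y, v ⬝ᵥ (P y).mulVec v =
      (∑ i, ∑ j, fderiv ℝ h y v i * Q (h y) i j * fderiv ℝ h y v j)
        + ∑ α, ∑ β, fderiv ℝ hperp y v α * R (hperp y) α β * fderiv ℝ hperp y v β := by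
    intro y
    simp only [hPdef]
    rw [Matrix.add_mulVec, dotProduct_add, pull_quad, pull_quad, dot_expand, dot_expand]
  have hψ := (HasFDerivAt.fun_sum (fun i (_ : i ∈ Finset.univ) =>
      HasFDerivAt.fun_sum (fun j (_ : j ∈ Finset.univ) =>
        ((hUh v i).fun_mul (hq i j)).fun_mul (hUh v j)))).fun_add
    (HasFDerivAt.fun_sum (fun α (_ : α ∈ Finset.univ) =>
      HasFDerivAt.fun_sum (fun β (_ : β ∈ Finset.univ) =>
        ((hUp v α).fun_mul (hr α β)).fun_mul (hUp v β))))
  have hχ2 : HasFDerivAt (fun y => v ⬝ᵥ (P y).mulVec v) _ x :=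
    hψ.congr_of_eventuallyEq (Filter.Eventually.of_forall hχval)
  have hχ1 : HasFDerivAt (fun y => v ⬝ᵥ (P y).mulVec v)
      (∑ a, ∑ b, (v a * v b) • fderiv ℝ (fun y => P y a b) x) x := by
    have hval2 : ∀ y, v ⬝ᵥ (P y).mulVec v = ∑ a, ∑ b, (v a * v b) * P y a b := by
      intro y
      rw [dot_expand]
      exact Finset.sum_congr rfl fun a _ => Finset.sum_congr rfl fun b _ => by ring
    exact (HasFDerivAt.fun_sum (fun a (_ : a ∈ Finset.univ) =>
      HasFDerivAt.fun_sum (fun b (_ : b ∈ Finset.univ) =>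
        ((hPdiff a b).hasFDerivAt.const_mul (v a * v b))))).congr_of_eventuallyEq
      (Filter.Eventually.of_forall hval2)
  have hDeq := hχ1.unique hχ2
  -- pdv-to-fderiv conversions
  have hpdvP : ∀ a b : Fin n, (∑ c, pdv (fun y => P y a b) c x * f x c)
      = fderiv ℝ (fun y => P y a b) x (f x) := by
    intro a b
    rw [clm_sum_single (fderiv ℝ (fun y => P y a b) x) (f x)]
    simp [pdv, mul_comm]
  have hpdvf : ∀ (c b : Fin n), pdv (fun y => f y c) b x
      = fderiv ℝ f x (Pi.single b 1) c := by
    intro c b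
    have hc : HasFDerivAt (fun y => f y c)
        ((ContinuousLinearMap.proj c).comp (fderiv ℝ f x)) x := by
      exact (ContinuousLinearMap.proj c).hasFDerivAt.comp x hDf
    simp only [pdv, hc.fderiv]
    rfl
  have hDfv : ∀ c, (∑ b, pdv (fun y => f y c) b x * v b) = fderiv ℝ f x v c := by
    intro c
    conv_rhs => rw [clm_sum_single (fderiv ℝ f x) v]
    simp [hpdvf, mul_comm]
  -- step 1 : expand the Lie derivative quadratic form
  have hB : (∑ a, ∑ b, v a * (∑ c, P x a c * pdv (fun y => f y c) b x) * v b)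
      = v ⬝ᵥ (P x).mulVec (fderiv ℝ f x v) := by
    rw [dot_expand]
    refine Finset.sum_congr rfl fun a _ => ?_
    simp only [Finset.mul_sum, Finset.sum_mul]
    rw [Finset.sum_comm]
    refine Finset.sum_congr rfl fun c _ => ?_
    rw [← hDfv c, Finset.mul_sum]
    exact Finset.sum_congr rfl fun b _ => by ring
  have hC : (∑ a, ∑ b, v b * (∑ c, P x b c * pdv (fun y => f y c) a x) * v a)
      = v ⬝ᵥ (P x).mulVec (fderiv ℝ f x v) := by
    rw [Finset.sum_comm]
    exact hB
  have step1 : v ⬝ᵥ (lieDerivM f P x).mulVec v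
      = (∑ a, ∑ b, (v a * v b) * (fderiv ℝ (fun y => P y a b) x (f x)))
        + 2 * (v ⬝ᵥ (P x).mulVec (fderiv ℝ f x v)) := by
    rw [dot_expand]
    simp only [lieDerivM, Matrix.of_apply]
    have expand : ∀ a b : Fin n,
        v a * (∑ c, (pdv (fun y => P y a b) c x * f x c
            + P x a c * pdv (fun y => f y c) b x
            + P x b c * pdv (fun y => f y c) a x)) * v b
        = (v a * v b) * (fderiv ℝ (fun y => P y a b) x (f x))
          + (v a * (∑ c, P x a c * pdv (fun y => f y c) b x) * v b
            + v b * (∑ c, P x b c * pdv (fun y => f y c) a x) * v a) := by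
      intro a b
      rw [Finset.sum_add_distrib, Finset.sum_add_distrib, hpdvP a b]
      ring
    rw [Finset.sum_congr rfl fun a _ => Finset.sum_congr rfl fun b _ => expand a b]
    simp only [Finset.sum_add_distrib]
    rw [hB, hC]
    ring
  -- the value of the P-derivative term
  have hA : (∑ a, ∑ b, (v a * v b) * (fderiv ℝ (fun y => P y a b) x (f x)))
      = (∑ a, ∑ b, (v a * v b) • fderiv ℝ (fun y => P y a b) x) (f x) := by
    simp
  -- the P x term with one Df-vector
  have hT : v ⬝ᵥ (P x).mulVec (fderiv ℝ f x v)
      = ∑ α, ∑ β, fderiv ℝ hperp x v α * R (hperp x) α β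
          * fderiv ℝ hperp x (fderiv ℝ f x v) β := by
    simp only [hPdef]
    rw [Matrix.add_mulVec, dotProduct_add, pull_quad, pull_quad, hv]
    simp only [zero_dotProduct, zero_add]
    rw [dot_expand]
  -- derivative of g
  have hg' : HasFDerivAt g ((fderiv ℝ hperp x).comp (fderiv ℝ f x)
      + (fderiv ℝ (fderiv ℝ hperp) x).flip (f x)) x := hFp.clm_apply hDf
  have hsym2 : ∀ z1 z2 : Fin n → ℝ,
      fderiv ℝ (fderiv ℝ hperp) x z1 z2 = fderiv ℝ (fderiv ℝ hperp) x z2 z1 :=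
    fun z1 z2 => second_derivative_symmetric (fun y => (hpd y).hasFDerivAt) hFp z1 z2
  have hRD : ∀ α β, fderiv ℝ (fun ξ => R ξ α β) (hperp x) (fderiv ℝ hperp x (f x))
      = ∑ γ, pdv (fun ξ => R ξ α β) γ (hperp x) * (fderiv ℝ hperp x (f x) γ) := by
    intro α β
    rw [clm_sum_single (fderiv ℝ (fun ξ => R ξ α β) (hperp x))]
    simp [pdv, mul_comm]
  have hRs : ∀ α β, R (hperp x) β α = R (hperp x) α β := fun α β => (hRsym (hperp x)).apply α β
  have hswap : ∀ X : Fin s → ℝ,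
      (∑ α, ∑ β, X α * R (hperp x) α β * fderiv ℝ hperp x v β)
        = ∑ α, ∑ β, fderiv ℝ hperp x v α * R (hperp x) α β * X β := by
    intro X
    rw [Finset.sum_comm]
    exact Finset.sum_congr rfl fun α _ => Finset.sum_congr rfl fun β _ => by
      rw [hRs α β]; ring
  rw [step1, hT, hA, hDeq]
  rw [hgdef]
  rw [hg'.fderiv]
  rw [dot_expand, dot_expand]
  simp only [Matrix.of_apply, ContinuousLinearMap.add_apply, ContinuousLinearMap.sum_apply,
    ContinuousLinearMap.smul_apply, ContinuousLinearMap.coe_comp', Function.comp_apply,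
    ContinuousLinearMap.proj_apply, ContinuousLinearMap.apply_apply,
    ContinuousLinearMap.flip_apply, smul_eq_mul, hv, Pi.zero_apply]
  simp only [zero_mul, mul_zero, zero_add, add_zero, Finset.sum_const_zero, Pi.add_apply,
    hsym2 v (f x), ← hRD, mul_add, add_mul, Finset.sum_add_distrib]
  have e2 : (∑ x_1 : Fin s, ∑ x_2 : Fin s, (fderiv ℝ hperp x) v x_2 *
        ((fderiv ℝ hperp x) v x_1
          * (fderiv ℝ (fun ξ => R ξ x_1 x_2) (hperp x)) ((fderiv ℝ hperp x) (f x))))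
      = ∑ x_1 : Fin s, ∑ x_2 : Fin s, (fderiv ℝ hperp x) v x_1 *
          (fderiv ℝ (fun ξ => R ξ x_1 x_2) (hperp x)) ((fderiv ℝ hperp x) (f x)) *
            (fderiv ℝ hperp x) v x_2 :=
    Finset.sum_congr rfl fun _ _ => Finset.sum_congr rfl fun _ _ => by ring
  have e3 : (∑ x_1 : Fin s, ∑ x_2 : Fin s, (fderiv ℝ hperp x) v x_2 *
        (R (hperp x) x_1 x_2 * ((fderiv ℝ (fderiv ℝ hperp) x) (f x)) v x_1))
      = ∑ x_1 : Fin s, ∑ x_2 : Fin s, (fderiv ℝ hperp x) v x_1 * R (hperp x) x_1 x_2 *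
          ((fderiv ℝ (fderiv ℝ hperp) x) (f x)) v x_2 := by
    rw [Finset.sum_comm]
    exact Finset.sum_congr rfl fun α _ => Finset.sum_congr rfl fun β _ => by
      rw [hRs α β]; ring
  rw [e2, e3, hswap (fun α => (fderiv ℝ hperp x) ((fderiv ℝ f x) v) α),
    hswap (fun α => ((fderiv ℝ (fderiv ℝ hperp) x) (f x)) v α)]
  ring
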